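/- arXiv:1609.00525 — 7 statements merged into one kernel-verified Lean document; each statement's English description precedes it below -/
import Mathlib

section
/- For every positive integer q, the number of pairs (p1,p2) of integers with 0 < p1, p2 ≤ q and gcd(p1,p2,q)=1 equals the sum over divisors a of q of a·φ(a)·φ(q/a). -/
open Finset

lemma countIcc (q : ℕ) (hq : 0 < q) (P : ℕ → Prop) [DecidablePred P] (hP : P q ↔ P 0) :
    #{x ∈ Icc 1 q | P x} = #{x ∈ range q | P x} := by
  have h1 : Icc 1 q = insert q (Ico 1 q) := by
    rw [Finset.Ico_insert_right hq]
  have h2 : range q = insert 0 (Ico 1 q) := by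
    rw [range_eq_Ico, ← Finset.insert_Ico_add_one_left_eq_Ico hq, zero_add]
  rw [h1, h2, filter_insert, filter_insert]
  by_cases h : P q
  · rw [if_pos h, if_pos (hP.mp h), card_insert_of_notMem (by simp), card_insert_of_notMem (by simp)]
  · rw [if_neg h, if_neg (fun h0 => h (hP.mpr h0))]

lemma countCop (g : ℕ) : ∀ k, #{x ∈ range (g * k) | Nat.Coprime g x} = k * g.totient := by
  intro k
  induction k with
  | zero => simp
  | succ k ih =>
      have h : Ico 0 (g * (k+1)) = Ico 0 (g * k) ∪ Ico (g * k) (g * k + g) := by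
        rw [Finset.Ico_union_Ico_eq_Ico (Nat.zero_le _) (by nlinarith)]
        congr 1
      rw [range_eq_Ico, h, ← range_eq_Ico, filter_union, card_union_of_disjoint
          (disjoint_filter_filter (by rw [range_eq_Ico]; exact Finset.Ico_disjoint_Ico_consecutive 0 (g*k) (g*k+g))),
        ih, Nat.filter_coprime_Ico_eq_totient g (g * k)]
      ring

lemma countL2 (q d : ℕ) (hq : 0 < q) (hd : d ∣ q) :
    #{x ∈ Icc 1 q | Nat.gcd x d = 1} = (q / d) * d.totient := by
  rw [countIcc q hq _ (by rw [Nat.gcd_eq_right hd, Nat.gcd_zero_left])]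
  have h2 : ∀ x, Nat.gcd x d = 1 ↔ Nat.Coprime d x := by
    intro x; rw [Nat.Coprime, Nat.gcd_comm]
  simp only [h2]
  conv_lhs => rw [← Nat.mul_div_cancel' hd]
  exact countCop d (q / d)

lemma countL3 (q d : ℕ) (hq : 0 < q) (hd : d ∣ q) :
    #{x ∈ Icc 1 q | Nat.gcd q x = d} = (q / d).totient := by
  rw [countIcc q hq _ (by rw [Nat.gcd_self, Nat.gcd_zero_right]),
    ← Nat.totient_div_of_dvd hd]

theorem stmt0 (q : ℕ) (hq : 0 < q) :
    ((Finset.Icc 1 q ×ˢ Finset.Icc 1 q).filter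
        (fun p => Nat.gcd (Nat.gcd p.1 p.2) q = 1)).card
      = ∑ a ∈ q.divisors, a * Nat.totient a * Nat.totient (q / a) := by
  rw [Finset.card_eq_sum_card_fiberwise
    (f := fun p : ℕ × ℕ => Nat.gcd q p.2) (t := q.divisors)
    (fun p _ => Nat.mem_divisors.mpr ⟨Nat.gcd_dvd_left q p.2, hq.ne'⟩)]
  have key : ∀ d ∈ q.divisors,
      #{p ∈ (Icc 1 q ×ˢ Icc 1 q).filter (fun p => Nat.gcd (Nat.gcd p.1 p.2) q = 1) |
          Nat.gcd q p.2 = d}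
      = ((q / d) * d.totient) * (q / d).totient := by
    intro d hd
    obtain ⟨hdvd, -⟩ := Nat.mem_divisors.mp hd
    have hset : ((Icc 1 q ×ˢ Icc 1 q).filter (fun p => Nat.gcd (Nat.gcd p.1 p.2) q = 1)).filter
          (fun p => Nat.gcd q p.2 = d)
        = ({x ∈ Icc 1 q | Nat.gcd x d = 1} ×ˢ {x ∈ Icc 1 q | Nat.gcd q x = d}) := by
      ext p
      simp only [mem_filter, mem_product]
      constructor
      · rintro ⟨⟨⟨h1, h2⟩, h3⟩, h4⟩
        refine ⟨⟨h1, ?_⟩, h2, h4⟩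
        rwa [Nat.gcd_assoc, Nat.gcd_comm p.2 q, h4] at h3
      · rintro ⟨⟨h1, h3⟩, h2, h4⟩
        refine ⟨⟨⟨h1, h2⟩, ?_⟩, h4⟩
        rwa [Nat.gcd_assoc, Nat.gcd_comm p.2 q, h4]
    rw [hset, card_product, countL2 q d hq hdvd, countL3 q d hq hdvd]
  rw [sum_congr rfl key, ← Nat.sum_div_divisors q (fun a => a * a.totient * (q / a).totient)]
  refine sum_congr rfl fun d hd => ?_
  rw [Nat.div_div_self (Nat.mem_divisors.mp hd).1 hq.ne']
  ring
end

section
/- For every positive integer q, the number of pairs (p1,p2) of integers with 0 < p1, p2 ≤ q and gcd(p1,p2,q)=1 equals φ(q) · Σ_{d | ℓ} μ(d) σ₁(q/d²), where ℓ is the largest positive integer whose square divides q. -/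
open ArithmeticFunction Finset
open scoped ArithmeticFunction.Moebius ArithmeticFunction.sigma

namespace Stmt2Aux

/-- `μ(√n)` if `n` is a perfect square, else `0`. -/
def s : ArithmeticFunction ℤ :=
  ⟨fun n => if n.sqrt ^ 2 = n then μ n.sqrt else 0, by simp⟩

lemma s_apply (n : ℕ) : s n = if n.sqrt ^ 2 = n then μ n.sqrt else 0 := rfl

lemma s_sq (d : ℕ) : s (d ^ 2) = μ d := by
  rw [s_apply, Nat.sqrt_eq', if_pos rfl]

lemma s_of_not_sq {n : ℕ} (h : ¬ n.sqrt ^ 2 = n) : s n = 0 := by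
  rw [s_apply, if_neg h]

lemma sqrt_dvd {n : ℕ} (h : n.sqrt ^ 2 = n) : n.sqrt ∣ n :=
 by
  conv_rhs => rw [← h]
  exact dvd_pow_self _ two_ne_zero

lemma s_mult : s.IsMultiplicative := by
  constructor
  · simp [s_apply]
  · intro m n hmn
    by_cases hm : m.sqrt ^ 2 = m
    · by_cases hn : n.sqrt ^ 2 = n
      · have hmn' : (m.sqrt * n.sqrt) ^ 2 = m * n := by rw [mul_pow, hm, hn]
        have hs : (m * n).sqrt = m.sqrt * n.sqrt := by rw [← hmn', Nat.sqrt_eq']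
        have hcop : Nat.Coprime m.sqrt n.sqrt :=
          Nat.Coprime.coprime_dvd_left (sqrt_dvd hm)
            (Nat.Coprime.coprime_dvd_right (sqrt_dvd hn) hmn)
        rw [s_apply, s_apply, s_apply, if_pos hm, if_pos hn, hs,
          if_pos hmn', isMultiplicative_moebius.map_mul_of_coprime hcop]
      · have hns : ¬ (m * n).sqrt ^ 2 = m * n := by
          intro h
          apply hn
          obtain ⟨d, hd⟩ := exists_eq_pow_of_mul_eq_pow (α := ℕ)
            (by simp only [Nat.isUnit_iff]; exact hmn.symm.gcd_eq_one)
            (show n * m = (m * n).sqrt ^ 2 by rw [mul_comm, h])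
          rw [hd, Nat.sqrt_eq']
        rw [s_of_not_sq hns, s_of_not_sq hn, mul_zero]
    · have hns : ¬ (m * n).sqrt ^ 2 = m * n := by
        intro h
        apply hm
        obtain ⟨d, hd⟩ := exists_eq_pow_of_mul_eq_pow (α := ℕ)
          (by simp only [Nat.isUnit_iff]; exact hmn.gcd_eq_one)
          (show m * n = (m * n).sqrt ^ 2 by rw [h])
        rw [hd, Nat.sqrt_eq']
      rw [s_of_not_sq hns, s_of_not_sq hm, zero_mul]

lemma s_prime_pow {p : ℕ} (hp : p.Prime) (i : ℕ) :
    s (p ^ i) = if i = 0 then 1 else if i = 2 then -1 else 0 := by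
  rcases Nat.even_or_odd i with ⟨j, rfl⟩ | hodd
  · have h : p ^ (j + j) = (p ^ j) ^ 2 := by ring
    rw [h, s_sq]
    match j with
    | 0 => simp
    | 1 => simp [moebius_apply_prime hp]
    | (k + 2) =>
      rw [moebius_apply_prime_pow hp (by omega)]
      simp only [show ¬ k + 2 = 1 by omega, if_false]
      have h1 : ¬ (k + 2) + (k + 2) = 0 := by omega
      have h2 : ¬ (k + 2) + (k + 2) = 2 := by omega
      simp [h1, h2]
  · have hns : ¬ (p ^ i).sqrt ^ 2 = p ^ i := by
      intro h
      have h2 : ((p ^ i).sqrt ^ 2).factorization p = (p ^ i).factorization p := by rw [h]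
      rw [Nat.factorization_pow, hp.factorization_pow] at h2
      simp only [Finsupp.smul_apply, Finsupp.single_eq_same, smul_eq_mul] at h2
      exact (Nat.not_even_iff_odd.mpr hodd) ⟨(p ^ i).sqrt.factorization p, by omega⟩
    rw [s_of_not_sq hns]
    have h0 : i ≠ 0 := by rintro rfl; exact (Nat.not_even_iff_odd.mpr hodd) (by simp) 
    have h2 : i ≠ 2 := by rintro rfl; exact (Nat.not_even_iff_odd.mpr hodd) ⟨1, rfl⟩
    simp [h0, h2]

/-- Euler's totient as a `ℤ`-valued arithmetic function. -/
def phi : ArithmeticFunction ℤ :=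
  ⟨fun n => (n.totient : ℤ), by simp⟩

lemma phi_apply (n : ℕ) : phi n = (n.totient : ℤ) := rfl

lemma phi_mult : phi.IsMultiplicative := by
  constructor
  · simp [phi_apply]
  · intro m n hmn
    simp [phi_apply, Nat.totient_mul hmn]

/-- `J₂`, the number-of-coprime-pairs function. -/
noncomputable def F : ArithmeticFunction ℤ := μ * ↑(pow 2)

/-- `φ · ψ` (Dedekind psi written as `s * σ₁`). -/
noncomputable def G : ArithmeticFunction ℤ := phi.pmul (s * ↑(σ 1))

lemma F_mult : F.IsMultiplicative :=
  isMultiplicative_moebius.mul (isMultiplicative_pow.natCast)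

lemma G_mult : G.IsMultiplicative :=
  phi_mult.pmul (s_mult.mul isMultiplicative_sigma.natCast)

lemma mul_apply_prime_pow {f g : ArithmeticFunction ℤ} {p : ℕ} (hp : p.Prime) (m : ℕ) :
    (f * g) (p ^ m) = ∑ x ∈ range (m + 1), f (p ^ x) * g (p ^ (m - x)) := by
  rw [mul_apply, Nat.sum_divisorsAntidiagonal (fun a b => f a * g b),
    Nat.sum_divisors_prime_pow hp]
  refine Finset.sum_congr rfl fun x hx => ?_
  rw [mem_range] at hx
  rw [Nat.pow_div (by omega : x ≤ m) hp.pos]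

lemma F_prime_pow {p : ℕ} (hp : p.Prime) (k : ℕ) :
    F (p ^ (k + 1)) = ((p : ℤ) ^ (k + 1)) ^ 2 - ((p : ℤ) ^ k) ^ 2 := by
  rw [F, mul_apply_prime_pow hp, sum_range_succ', sum_range_succ']
  have hz : ∀ i ∈ range k, μ (p ^ (i + 1 + 1)) * (↑(pow 2) : ArithmeticFunction ℤ) (p ^ (k + 1 - (i + 1 + 1))) = 0 := by
    intro i _
    rw [moebius_apply_prime_pow hp (by omega), if_neg (by omega), zero_mul]
  rw [Finset.sum_eq_zero hz]
  simp only [zero_add, pow_zero, pow_one, moebius_apply_one, moebius_apply_prime hp,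
    natCoe_apply, pow_apply]
  have h1 : k + 1 - 0 = k + 1 := by omega
  have h2 : k + 1 - 1 = k := by omega
  rw [h1, h2]
  have hpk : p ^ (k+1) ≠ 0 := (Nat.pow_pos hp.pos).ne'
  have hpk' : p ^ k ≠ 0 := (Nat.pow_pos hp.pos).ne'
  simp only [show ¬((2:ℕ) = 0 ∧ p ^ (k+1) = 0) by tauto, show ¬((2:ℕ) = 0 ∧ p ^ k = 0) by tauto,
    if_false]
  push_cast
  ring

lemma G_prime_pow {p : ℕ} (hp : p.Prime) (k : ℕ) :
    G (p ^ (k + 1)) = ((p : ℤ) ^ (k + 1)) ^ 2 - ((p : ℤ) ^ k) ^ 2 := by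
  have hσ : ∀ m : ℕ, ((σ 1 (p ^ m) : ℕ) : ℤ) = ∑ j ∈ range (m + 1), (p : ℤ) ^ j := by
    intro m
    rw [sigma_one_apply_prime_pow hp]
    push_cast
    rfl
  have htot : (((p ^ (k+1)).totient : ℕ) : ℤ) = (p : ℤ) ^ k * ((p : ℤ) - 1) := by
    rw [Nat.totient_prime_pow hp (Nat.succ_pos k)]
    push_cast [Nat.cast_sub hp.one_lt.le]
    simp
  rw [G, pmul_apply, phi_apply, htot, mul_apply_prime_pow hp]
  have hterm : ∀ x, s (p ^ x) * (↑(σ 1) : ArithmeticFunction ℤ) (p ^ (k + 1 - x))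
      = (if x = 0 then 1 else if x = 2 then -1 else 0) * ((σ 1 (p ^ (k + 1 - x)) : ℕ) : ℤ) := by
    intro x
    rw [s_prime_pow hp, natCoe_apply]
  simp only [hterm]
  cases k with
  | zero =>
    rw [show (0:ℕ) + 1 + 1 = 2 by rfl, Finset.sum_range_succ, Finset.sum_range_succ,
      Finset.sum_range_zero]
    norm_num
    have hs1 : ((σ 1 p : ℕ) : ℤ) = (p : ℤ) + 1 := by
      rw [← pow_one p, hσ 1]
      rw [Finset.sum_range_succ, Finset.sum_range_succ, Finset.sum_range_zero]
      ring
    rw [hs1]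
    ring
  | succ n =>
    rw [sum_range_succ', sum_range_succ', sum_range_succ']
    have hz : ∀ i ∈ range n,
        (if i + 1 + 1 + 1 = 0 then (1:ℤ) else if i + 1 + 1 + 1 = 2 then -1 else 0) *
          ((σ 1 (p ^ (n + 1 + 1 - (i + 1 + 1 + 1))) : ℕ) : ℤ) = 0 := by
      intro i _
      rw [if_neg (by omega), if_neg (by omega), zero_mul]
    rw [Finset.sum_eq_zero hz]
    norm_num
    have e1 : n + 1 + 1 - 2 = n := by omega
    have e2 : n + 1 + 1 - 1 = n + 1 := by omega
    rw [e1, hσ, hσ]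
    have hpeel : (∑ j ∈ range (n+1+1+1), (p:ℤ)^j)
        = (∑ j ∈ range (n+1), (p:ℤ)^j) + (p:ℤ)^(n+1) + (p:ℤ)^(n+1+1) := by
      rw [Finset.sum_range_succ, Finset.sum_range_succ]
    rw [hpeel]
    ring

lemma F_eq_G : F = G := by
  rw [IsMultiplicative.eq_iff_eq_on_prime_powers F F_mult G G_mult]
  intro p i hp
  cases i with
  | zero => simp only [pow_zero, F_mult.map_one, G_mult.map_one]
  | succ k => rw [F_prime_pow hp, G_prime_pow hp]

lemma sum_moebius (n : ℕ) : (∑ d ∈ n.divisors, μ d) = if n = 1 then 1 else 0 := by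
  rw [← coe_mul_zeta_apply, moebius_mul_coe_zeta, one_apply]

lemma count_eq (q : ℕ) (hq : 0 < q) :
    (((Finset.Icc 1 q ×ˢ Finset.Icc 1 q).filter
        (fun p => Nat.gcd (Nat.gcd p.1 p.2) q = 1)).card : ℤ)
      = F q := by
  have hdiv : ∀ a b : ℕ, (Nat.gcd (Nat.gcd a b) q).divisors
      = q.divisors.filter (fun d => d ∣ a ∧ d ∣ b) := by
    intro a b
    ext d
    simp only [Nat.mem_divisors, Finset.mem_filter, Nat.dvd_gcd_iff]
    constructor
    · rintro ⟨⟨⟨h1, h2⟩, h3⟩, -⟩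
      exact ⟨⟨h3, hq.ne'⟩, h1, h2⟩
    · rintro ⟨⟨h3, -⟩, h1, h2⟩
      refine ⟨⟨⟨h1, h2⟩, h3⟩, ?_⟩
      simp [Nat.gcd_eq_zero_iff, hq.ne']
  have hIcc : Finset.Icc 1 q = Finset.Ioc 0 q := by rw [← Finset.Icc_add_one_left_eq_Ioc, zero_add]
  rw [Finset.card_filter]
  push_cast
  calc (∑ x ∈ Finset.Icc 1 q ×ˢ Finset.Icc 1 q,
        if Nat.gcd (Nat.gcd x.1 x.2) q = 1 then (1:ℤ) else 0)
      = ∑ x ∈ Finset.Icc 1 q ×ˢ Finset.Icc 1 q, ∑ d ∈ q.divisors,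
          if d ∣ x.1 ∧ d ∣ x.2 then μ d else 0 := by
        refine Finset.sum_congr rfl fun x _ => ?_
        rw [← sum_moebius, hdiv, Finset.sum_filter]
    _ = ∑ d ∈ q.divisors, ∑ x ∈ Finset.Icc 1 q ×ˢ Finset.Icc 1 q,
          if d ∣ x.1 ∧ d ∣ x.2 then μ d else 0 := Finset.sum_comm
    _ = ∑ d ∈ q.divisors, μ d * ((q / d : ℕ) : ℤ) ^ 2 := by
        refine Finset.sum_congr rfl fun d _ => ?_
        have hc : ((Finset.Icc 1 q).filter (fun x => d ∣ x)).card = q / d := by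
          rw [hIcc, Nat.Ioc_filter_dvd_card_eq_div]
        rw [← Finset.sum_filter, Finset.filter_product, Finset.sum_const,
          Finset.card_product, hc, nsmul_eq_mul]
        push_cast
        ring
    _ = F q := by
        rw [F, mul_apply,
          Nat.sum_divisorsAntidiagonal (fun a b => μ a * (↑(pow 2) : ArithmeticFunction ℤ) b)]
        refine Finset.sum_congr rfl fun d hd => ?_
        rw [natCoe_apply, pow_apply, if_neg (by simp)]
        push_cast
        ring

lemma ell_divisors {q ℓ : ℕ} (hq : 0 < q) (hℓpos : 0 < ℓ) (hℓ : ℓ ^ 2 ∣ q)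
    (hmax : ∀ l : ℕ, 0 < l → l ^ 2 ∣ q → l ≤ ℓ) :
    ℓ.divisors = q.divisors.filter (fun d => d ^ 2 ∣ q) := by
  ext d
  simp only [Nat.mem_divisors, Finset.mem_filter]
  constructor
  · rintro ⟨hd, -⟩
    have hd2 : d ^ 2 ∣ q := (pow_dvd_pow_of_dvd hd 2).trans hℓ
    exact ⟨⟨(dvd_pow_self d two_ne_zero).trans hd2, hq.ne'⟩, hd2⟩
  · rintro ⟨⟨hdq, -⟩, hd2⟩
    have hd0 : d ≠ 0 := by
      rintro rfl
      rw [zero_pow two_ne_zero, zero_dvd_iff] at hd2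
      omega
    have hl0 : Nat.lcm d ℓ ≠ 0 := Nat.lcm_ne_zero hd0 hℓpos.ne'
    have hlq : Nat.lcm d ℓ ^ 2 ∣ q := by
      rw [← Nat.factorization_le_iff_dvd (pow_ne_zero 2 hl0) hq.ne', Finsupp.le_def]
      intro p
      have h1p := (Finsupp.le_def.mp
        ((Nat.factorization_le_iff_dvd (pow_ne_zero 2 hd0) hq.ne').mpr hd2)) p
      have h2p := (Finsupp.le_def.mp
        ((Nat.factorization_le_iff_dvd (pow_ne_zero 2 hℓpos.ne') hq.ne').mpr hℓ)) p
      rw [Nat.factorization_pow] at h1p h2p ⊢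
      rw [Nat.factorization_lcm hd0 hℓpos.ne']
      simp only [Finsupp.smul_apply, Finsupp.sup_apply, smul_eq_mul] at *
      omega
    have hle := hmax _ (Nat.pos_of_ne_zero hl0) hlq
    have heq : Nat.lcm d ℓ = ℓ :=
      le_antisymm hle (Nat.le_of_dvd (Nat.pos_of_ne_zero hl0) (Nat.dvd_lcm_right d ℓ))
    exact ⟨heq ▸ Nat.dvd_lcm_left d ℓ, hℓpos.ne'⟩

lemma rhs_eq {q : ℕ} (hq : 0 < q) :
    (∑ d ∈ (q.divisors.filter (fun d => d ^ 2 ∣ q)), μ d * ((σ 1 (q / d ^ 2) : ℕ) : ℤ))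
      = (s * ↑(σ 1)) q := by
  rw [mul_apply,
    Nat.sum_divisorsAntidiagonal (fun a b => s a * (↑(σ 1) : ArithmeticFunction ℤ) b)]
  have hfil : ∀ x ∈ q.divisors,
      (fun m => s m * (↑(σ 1) : ArithmeticFunction ℤ) (q / m)) x ≠ 0 → x.sqrt ^ 2 = x := by
    intro x hx hne
    by_contra h
    exact hne (by show s x * _ = 0; rw [s_of_not_sq h, zero_mul])
  rw [← Finset.sum_filter_of_ne hfil]
  refine Finset.sum_nbij' (i := fun d => d ^ 2) (j := fun m => m.sqrt) ?_ ?_ ?_ ?_ ?_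
  · intro d hd
    simp only [Finset.mem_filter, Nat.mem_divisors] at hd ⊢
    exact ⟨⟨hd.2, hq.ne'⟩, by rw [Nat.sqrt_eq']⟩
  · intro m hm
    simp only [Finset.mem_filter, Nat.mem_divisors] at hm ⊢
    refine ⟨⟨(sqrt_dvd hm.2).trans hm.1.1, hq.ne'⟩, ?_⟩
    rw [hm.2]
    exact hm.1.1
  · intro d hd
    exact Nat.sqrt_eq' d
  · intro m hm
    simp only [Finset.mem_filter] at hm
    exact hm.2
  · intro d hd
    rw [s_sq, natCoe_apply]

end Stmt2Aux

theorem stmt2 (q : ℕ) (hq : 0 < q) (ℓ : ℕ) (hℓpos : 0 < ℓ) (hℓ : ℓ ^ 2 ∣ q)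
    (hmax : ∀ l : ℕ, 0 < l → l ^ 2 ∣ q → l ≤ ℓ) :
    (((Finset.Icc 1 q ×ˢ Finset.Icc 1 q).filter
        (fun p => Nat.gcd (Nat.gcd p.1 p.2) q = 1)).card : ℤ)
      = (Nat.totient q : ℤ) *
        ∑ d ∈ ℓ.divisors, μ d * (∑ e ∈ (q / d ^ 2).divisors, (e : ℤ)) := by
  rw [Stmt2Aux.count_eq q hq, Stmt2Aux.F_eq_G, Stmt2Aux.G, pmul_apply, Stmt2Aux.phi_apply]
  congr 1
  rw [← Stmt2Aux.rhs_eq hq, Stmt2Aux.ell_divisors hq hℓpos hℓ hmax]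
  refine Finset.sum_congr rfl fun d _ => ?_
  rw [sigma_one_apply]
  push_cast
  rfl
end

section
/- For every positive integer q, the number of pairs (p1,p2) of integers with 0 < p1, p2 ≤ q and gcd(p1,p2,q)=1 is strictly greater than (6/π²)·q². -/
open Real Finset ArithmeticFunction
open scoped ArithmeticFunction.Moebius ArithmeticFunction.zeta

namespace Stmt3Aux

noncomputable def f : ArithmeticFunction ℝ :=
  ⟨fun n => ((n : ℝ) ^ 2)⁻¹, by simp⟩

lemma f_apply (n : ℕ) : f n = ((n : ℝ) ^ 2)⁻¹ := rfl

lemma f_mult : f.IsMultiplicative := by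
  refine ⟨by simp [f_apply], fun {m n} _ => ?_⟩
  simp only [f_apply]
  push_cast
  rw [mul_pow, mul_inv]

lemma squarefree_prod_primes {s : Finset ℕ} (hs : ∀ p ∈ s, p.Prime) :
    Squarefree (∏ p ∈ s, p) := by
  classical
  induction s using Finset.induction_on with
  | empty => simpa using squarefree_one
  | @insert p s hps ih =>
    rw [Finset.prod_insert hps]
    have hp := hs p (Finset.mem_insert_self _ _)
    have hcop : Nat.Coprime p (∏ x ∈ s, x) := by
      apply Nat.Coprime.prod_right
      intro t ht
      exact (Nat.coprime_primes hp (hs t (Finset.mem_insert_of_mem ht))).mpr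
        (fun h => hps (h ▸ ht))
    exact (Nat.squarefree_mul hcop).mpr
      ⟨hp.squarefree, ih fun t ht => hs t (Finset.mem_insert_of_mem ht)⟩

lemma sum_moebius_f (q : ℕ) (hq : q ≠ 0) :
    ∑ d ∈ q.divisors, (μ d : ℝ) * f d
      = ∏ p ∈ q.primeFactors, (1 - ((p : ℝ) ^ 2)⁻¹) := by
  set r := ∏ p ∈ q.primeFactors, p with hr
  have hprimes : ∀ p ∈ q.primeFactors, p.Prime := fun p hp => Nat.prime_of_mem_primeFactors hp
  have hsqf : Squarefree r := squarefree_prod_primes hprimes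
  have hrq : r ∣ q := Nat.prod_primeFactors_dvd q
  have hpf : r.primeFactors = q.primeFactors := Nat.primeFactors_prod hprimes
  have h1 : ∑ d ∈ r.divisors, (μ d : ℝ) * f d = ∑ d ∈ q.divisors, (μ d : ℝ) * f d := by
    apply Finset.sum_subset (Nat.divisors_subset_of_dvd hq hrq)
    intro d hd hdr
    have hnsq : ¬ Squarefree d := by
      intro hsq
      apply hdr
      rw [Nat.mem_divisors]
      refine ⟨?_, hsqf.ne_zero⟩
      calc d = ∏ p ∈ d.primeFactors, p := (Nat.prod_primeFactors_of_squarefree hsq).symm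
        _ ∣ r := Finset.prod_dvd_prod_of_subset _ _ _
            (Nat.primeFactors_mono (Nat.dvd_of_mem_divisors hd) hq)
    rw [ArithmeticFunction.moebius_eq_zero_of_not_squarefree hnsq]
    simp
  rw [← h1, ← hpf, ← ArithmeticFunction.IsMultiplicative.prodPrimeFactors_one_sub_of_squarefree
    f f_mult hsqf]
  rfl

lemma card_eq_sum (q : ℕ) (hq : 0 < q) :
    ((((Finset.Icc 1 q ×ˢ Finset.Icc 1 q).filter
        (fun p => Nat.gcd (Nat.gcd p.1 p.2) q = 1)).card : ℤ))
      = ∑ d ∈ q.divisors, (μ d) * ((q / d : ℕ) : ℤ) ^ 2 := by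
  classical
  have key : ∀ n : ℕ, (if n = 1 then (1 : ℤ) else 0) = ∑ d ∈ n.divisors, μ d := by
    intro n
    calc (if n = 1 then (1 : ℤ) else 0) = (1 : ArithmeticFunction ℤ) n := by
          rw [ArithmeticFunction.one_apply]
      _ = ((μ * ζ : ArithmeticFunction ℤ)) n := by rw [moebius_mul_coe_zeta]
      _ = ∑ d ∈ n.divisors, μ d := ArithmeticFunction.coe_mul_zeta_apply
  have hdiv : ∀ a b : ℕ, (Nat.gcd (Nat.gcd a b) q).divisors
      = q.divisors.filter (fun d => d ∣ a ∧ d ∣ b) := by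
    intro a b
    ext d
    simp only [Nat.mem_divisors, Finset.mem_filter, Nat.dvd_gcd_iff]
    constructor
    · rintro ⟨⟨⟨h1, h2⟩, h3⟩, -⟩
      exact ⟨⟨h3, hq.ne'⟩, h1, h2⟩
    · rintro ⟨⟨h3, -⟩, h1, h2⟩
      exact ⟨⟨⟨h1, h2⟩, h3⟩, Nat.gcd_ne_zero_right hq.ne'⟩
  calc ((((Finset.Icc 1 q ×ˢ Finset.Icc 1 q).filter
        (fun p => Nat.gcd (Nat.gcd p.1 p.2) q = 1)).card : ℤ))
      = ∑ p ∈ Finset.Icc 1 q ×ˢ Finset.Icc 1 q,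
          (if Nat.gcd (Nat.gcd p.1 p.2) q = 1 then (1 : ℤ) else 0) := by
        rw [Finset.card_filter]
        push_cast
        rfl
    _ = ∑ p ∈ Finset.Icc 1 q ×ˢ Finset.Icc 1 q, ∑ d ∈ q.divisors,
          (if d ∣ p.1 ∧ d ∣ p.2 then (μ d : ℤ) else 0) := by
        refine Finset.sum_congr rfl fun p _ => ?_
        rw [key, hdiv, Finset.sum_filter]
    _ = ∑ d ∈ q.divisors, ∑ p ∈ Finset.Icc 1 q ×ˢ Finset.Icc 1 q,
          (if d ∣ p.1 ∧ d ∣ p.2 then (μ d : ℤ) else 0) := Finset.sum_comm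
    _ = ∑ d ∈ q.divisors, (μ d) * ((q / d : ℕ) : ℤ) ^ 2 := by
        refine Finset.sum_congr rfl fun d _ => ?_
        rw [← Finset.sum_filter, Finset.sum_const,
          Finset.filter_product (fun x => d ∣ x) (fun x => d ∣ x), Finset.card_product]
        have hIcc : Finset.Icc 1 q = Finset.Ioc 0 q := rfl
        rw [hIcc, Nat.Ioc_filter_dvd_card_eq_div]
        rw [nsmul_eq_mul]
        push_cast [Int.natCast_ediv]
        ring

lemma card_eq_prod (q : ℕ) (hq : 0 < q) :
    ((((Finset.Icc 1 q ×ˢ Finset.Icc 1 q).filter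
        (fun p => Nat.gcd (Nat.gcd p.1 p.2) q = 1)).card : ℝ))
      = (q : ℝ) ^ 2 * ∏ p ∈ q.primeFactors, (1 - ((p : ℝ) ^ 2)⁻¹) := by
  have h := card_eq_sum q hq
  have h2 : ((((Finset.Icc 1 q ×ˢ Finset.Icc 1 q).filter
      (fun p => Nat.gcd (Nat.gcd p.1 p.2) q = 1)).card : ℝ))
      = ∑ d ∈ q.divisors, (μ d : ℝ) * ((q / d : ℕ) : ℝ) ^ 2 := by
    have h3 := congrArg (fun z : ℤ => (z : ℝ)) h
    push_cast at h3 ⊢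
    exact h3
  rw [h2, ← sum_moebius_f q hq.ne', Finset.mul_sum]
  refine Finset.sum_congr rfl fun d hd => ?_
  have hdvd : d ∣ q := Nat.dvd_of_mem_divisors hd
  have hd0 : (d : ℝ) ≠ 0 := Nat.cast_ne_zero.mpr (Nat.pos_of_mem_divisors hd).ne'
  rw [Nat.cast_div hdvd hd0, div_pow, f_apply]
  field_simp

lemma prod_gt (q : ℕ) (hq : 0 < q) :
    6 / π ^ 2 < ∏ p ∈ q.primeFactors, (1 - ((p : ℝ) ^ 2)⁻¹) := by
  classical
  set g : ℕ →* ℝ :=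
    { toFun := fun n => ((n : ℝ) ^ 2)⁻¹
      map_one' := by norm_num
      map_mul' := fun m n => by push_cast; rw [mul_pow, mul_inv] } with hg
  have hsum : Summable (fun n : ℕ => g n) := by
    simpa [hg] using (Real.summable_nat_pow_inv (p := 2)).mpr one_lt_two
  have heuler := EulerProduct.prod_filter_prime_geometric_eq_tsum_factoredNumbers hsum
    q.primeFactors
  rw [Finset.filter_true_of_mem (fun p hp => Nat.prime_of_mem_primeFactors hp)] at heuler
  have htsum : (∑' n : ℕ, g n) = π ^ 2 / 6 := by
    have := hasSum_zeta_two.tsum_eq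
    rw [← this]
    refine tsum_congr fun n => ?_
    simp [hg, one_div]
  obtain ⟨P, hPq, hP⟩ := Nat.exists_infinite_primes (q + 1)
  have hPnot : (P : ℕ) ∉ Nat.factoredNumbers q.primeFactors := by
    intro hmem
    have hPs : P ∈ q.primeFactors :=
      (Nat.mem_factoredNumbers'.mp hmem) P hP dvd_rfl
    have := Nat.le_of_dvd hq (Nat.dvd_of_mem_primeFactors hPs)
    omega
  have hlt : (∑' m : Nat.factoredNumbers q.primeFactors, g m) < π ^ 2 / 6 := by
    rw [← htsum, _root_.tsum_subtype]
    refine Summable.tsum_lt_tsum (i := P) ?_ ?_ (hsum.indicator _) hsum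
    · intro n
      refine Set.indicator_le_self' (fun x _ => ?_) n
      show (0 : ℝ) ≤ ((x : ℝ) ^ 2)⁻¹
      positivity
    · rw [Set.indicator_of_notMem hPnot]
      have : (0 : ℝ) < ((P : ℝ) ^ 2)⁻¹ := by
        have : (0 : ℝ) < (P : ℝ) := by exact_mod_cast hP.pos
        positivity
      exact this
  rw [← heuler] at hlt
  have hfac : ∀ p ∈ q.primeFactors, (0 : ℝ) < 1 - ((p : ℝ) ^ 2)⁻¹ := by
    intro p hp
    have h2 : (2 : ℝ) ≤ (p : ℝ) := by exact_mod_cast (Nat.prime_of_mem_primeFactors hp).two_le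
    have : ((p : ℝ) ^ 2)⁻¹ ≤ (4 : ℝ)⁻¹ := by
      apply inv_anti₀ (by norm_num)
      nlinarith
    linarith
  have hApos : (0 : ℝ) < ∏ p ∈ q.primeFactors, (1 - ((p : ℝ) ^ 2)⁻¹) :=
    Finset.prod_pos hfac
  have hprodinv : ∏ p ∈ q.primeFactors, (1 - g p)⁻¹
      = (∏ p ∈ q.primeFactors, (1 - ((p : ℝ) ^ 2)⁻¹))⁻¹ := by
    rw [← Finset.prod_inv_distrib]
    rfl
  rw [hprodinv] at hlt
  have := inv_strictAnti₀ (inv_pos.mpr hApos) hlt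
  rwa [inv_inv, inv_div] at this

end Stmt3Aux

open Stmt3Aux in
theorem stmt3 (q : ℕ) (hq : 0 < q) :
    (6 / π ^ 2) * (q : ℝ) ^ 2 <
      (((Finset.Icc 1 q ×ˢ Finset.Icc 1 q).filter
          (fun p => Nat.gcd (Nat.gcd p.1 p.2) q = 1)).card : ℝ) := by
  rw [card_eq_prod q hq, mul_comm ((q : ℝ) ^ 2)]
  have hq2 : (0 : ℝ) < (q : ℝ) ^ 2 := by positivity
  exact (mul_lt_mul_iff_left₀ hq2).mpr (prod_gt q hq)
end

section
/- For coprime positive integers q0 and q1 with q0·q1 = q, and integers ℓ0, ℓ1 satisfying q0ℓ0 + q1ℓ1 = 1, and for any divisor a of q0, integers n1, n2, b with b invertible mod q0/a: the double sum over c1 invertible mod q1 and c2 invertible mod q0 of e((n1(c1 q0 ℓ0 + c2 b̄ q1 ℓ1)a + n2(b c1 q0 ℓ0 + c2 q1 ℓ1))/q) equals c_{q1}(n1 a + n2 b) · c_{q0}(n1 b̄ a + n2), where c_r(n) denotes the Ramanujan sum and b̄ is an inverse of b mod q0/a. -/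
open Real

noncomputable def eChar (x : ℝ) : ℂ := Complex.exp (2 * π * Complex.I * x)

/-- Ramanujan sum `c_r(n) = ∑_{α mod r, gcd(α,r)=1} e(nα/r)`. -/
noncomputable def ramanujanSum (r : ℕ) (n : ℤ) : ℂ :=
  ∑ α ∈ (Finset.range r).filter (fun α => Nat.Coprime α r),
    eChar (((n * α : ℤ) : ℝ) / r)

lemma eChar_add (x y : ℝ) : eChar (x + y) = eChar x * eChar y := by
  unfold eChar
  push_cast
  rw [mul_add, Complex.exp_add]

lemma eChar_int (k : ℤ) : eChar (k : ℝ) = 1 := by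
  unfold eChar
  rw [← Complex.exp_int_mul_two_pi_mul_I k]
  congr 1
  push_cast
  ring

lemma eChar_congr (r : ℕ) (hr : 0 < r) {m m' : ℤ} (h : (m : ZMod r) = (m' : ZMod r)) :
    eChar ((m : ℝ) / r) = eChar ((m' : ℝ) / r) := by
  have hdvd : (r : ℤ) ∣ m - m' :=
    (ZMod.intCast_zmod_eq_zero_iff_dvd (m - m') r).mp (by push_cast [h]; ring)
  obtain ⟨k, hk⟩ := hdvd
  have hrR : (r : ℝ) ≠ 0 := by positivity
  have : (m : ℝ) / r = (k : ℤ) + (m' : ℝ) / r := by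
    have hm : (m : ℝ) = r * k + m' := by
      have : (m : ℝ) - m' = r * k := by exact_mod_cast congrArg (Int.cast : ℤ → ℝ) hk
      linarith
    field_simp [hm]
    linarith
  rw [this, eChar_add, eChar_int, one_mul]

lemma key (r : ℕ) (hr : 0 < r) (n u v : ℤ) (huv : (u : ZMod r) * (v : ZMod r) = 1) :
    ∑ α ∈ (Finset.range r).filter (fun α => Nat.Coprime α r),
      eChar (((n * u * α : ℤ) : ℝ) / r) = ramanujanSum r n := by
  haveI : NeZero r := ⟨hr.ne'⟩
  have hu : IsUnit (u : ZMod r) := IsUnit.of_mul_eq_one _ huv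
  have hv : IsUnit (v : ZMod r) := IsUnit.of_mul_eq_one _ (by rw [mul_comm]; exact huv)
  unfold ramanujanSum
  refine Finset.sum_nbij' (i := fun α => ((u : ZMod r) * (α : ZMod r)).val)
    (j := fun β => ((v : ZMod r) * (β : ZMod r)).val) ?_ ?_ ?_ ?_ ?_
  · intro α hα
    simp only [Finset.mem_filter, Finset.mem_range] at hα ⊢
    refine ⟨ZMod.val_lt _, ?_⟩
    rw [← ZMod.isUnit_iff_coprime]
    simp only [ZMod.natCast_val, ZMod.cast_id]
    exact hu.mul ((ZMod.isUnit_iff_coprime α r).mpr hα.2)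
  · intro β hβ
    simp only [Finset.mem_filter, Finset.mem_range] at hβ ⊢
    refine ⟨ZMod.val_lt _, ?_⟩
    rw [← ZMod.isUnit_iff_coprime]
    simp only [ZMod.natCast_val, ZMod.cast_id]
    exact hv.mul ((ZMod.isUnit_iff_coprime β r).mpr hβ.2)
  · intro α hα
    simp only [Finset.mem_filter, Finset.mem_range] at hα
    simp only [ZMod.natCast_val, ZMod.cast_id]
    rw [← mul_assoc, mul_comm (v : ZMod r) (u : ZMod r), huv, one_mul,
      ZMod.val_natCast_of_lt hα.1]
  · intro β hβ
    simp only [Finset.mem_filter, Finset.mem_range] at hβ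
    simp only [ZMod.natCast_val, ZMod.cast_id]
    rw [← mul_assoc, huv, one_mul, ZMod.val_natCast_of_lt hβ.1]
  · intro α hα
    apply eChar_congr r hr
    push_cast
    simp only [ZMod.natCast_val, ZMod.cast_id]
    ring

theorem stmt8 (q q0 q1 a : ℕ) (hq0 : 0 < q0) (hq1 : 0 < q1)
    (hcop : Nat.Coprime q0 q1) (hq : q = q0 * q1)
    (ℓ0 ℓ1 : ℤ) (hbezout : (q0 : ℤ) * ℓ0 + (q1 : ℤ) * ℓ1 = 1)
    (ha : a ∣ q0) (hapos : 0 < a)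
    (hrad : ∀ p : ℕ, p.Prime → p ∣ q0 → p ∣ a)
    (n1 n2 b bbar : ℤ) (hb : b * bbar ≡ 1 [ZMOD ((q0 / a : ℕ) : ℤ)]) :
    (∑ c1 ∈ (Finset.range q1).filter (fun c1 => Nat.Coprime c1 q1),
      ∑ c2 ∈ (Finset.range q0).filter (fun c2 => Nat.Coprime c2 q0),
        eChar ((((n1 * ((c1 : ℤ) * q0 * ℓ0 + (c2 : ℤ) * bbar * q1 * ℓ1) * a
            + n2 * (b * (c1 : ℤ) * q0 * ℓ0 + (c2 : ℤ) * q1 * ℓ1)) : ℤ) : ℝ) / q))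
      = ramanujanSum q1 (n1 * a + n2 * b) * ramanujanSum q0 (n1 * bbar * a + n2) := by
  subst hq
  have hq0R : (q0 : ℝ) ≠ 0 := by positivity
  have hq1R : (q1 : ℝ) ≠ 0 := by positivity
  have hsplit : ∀ c1 ∈ (Finset.range q1).filter (fun c1 => Nat.Coprime c1 q1),
      ∀ c2 ∈ (Finset.range q0).filter (fun c2 => Nat.Coprime c2 q0),
      eChar ((((n1 * ((c1 : ℤ) * q0 * ℓ0 + (c2 : ℤ) * bbar * q1 * ℓ1) * a
            + n2 * (b * (c1 : ℤ) * q0 * ℓ0 + (c2 : ℤ) * q1 * ℓ1)) : ℤ) : ℝ) / (q0 * q1 : ℕ))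
        = eChar ((((n1 * a + n2 * b) * ℓ0 * c1 : ℤ) : ℝ) / q1)
          * eChar ((((n1 * bbar * a + n2) * ℓ1 * c2 : ℤ) : ℝ) / q0) := by
    intro c1 _ c2 _
    rw [← eChar_add]
    congr 1
    push_cast
    field_simp
    ring
  rw [Finset.sum_congr rfl (fun c1 hc1 => Finset.sum_congr rfl (hsplit c1 hc1)),
    ← Finset.sum_mul_sum]
  have h1 : ((ℓ0 : ZMod q1) : ZMod q1) * ((q0 : ℤ) : ZMod q1) = 1 := by
    have := congrArg (Int.cast : ℤ → ZMod q1) hbezout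
    push_cast at this
    rw [ZMod.natCast_self] at this
    push_cast
    rw [mul_comm]
    linear_combination this
  have h2 : ((ℓ1 : ZMod q0) : ZMod q0) * ((q1 : ℤ) : ZMod q0) = 1 := by
    have := congrArg (Int.cast : ℤ → ZMod q0) hbezout
    push_cast at this
    rw [ZMod.natCast_self] at this
    push_cast
    rw [mul_comm]
    linear_combination this
  rw [key q1 hq1 (n1 * a + n2 * b) ℓ0 (q0 : ℤ) h1,
    key q0 hq0 (n1 * bbar * a + n2) ℓ1 (q1 : ℤ) h2]
end

section
/- Let q be a positive integer, a | q, and n1, n2 integers with n2 ≠ 0. Then Σ_{0 ≤ b < q/a} gcd(n1·a + n2·b, q/a) ≤ |n2| · (q/a) · σ₀(q/a), where σ₀ denotes the number-of-divisors function. -/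
theorem stmt10 (q a : ℕ) (hq : 0 < q) (ha : a ∣ q) (n1 n2 : ℤ) (hn2 : n2 ≠ 0) :
    ∑ b ∈ Finset.range (q / a), Int.gcd (n1 * a + n2 * b) ((q / a : ℕ) : ℤ)
      ≤ n2.natAbs * (q / a) * (q / a).divisors.card := by
  set m := q / a with hm_def
  have ha0 : 0 < a := Nat.pos_of_dvd_of_pos ha hq
  have hm : 0 < m := Nat.div_pos (Nat.le_of_dvd hq ha) ha0
  have hn2a : 0 < n2.natAbs := Int.natAbs_pos.mpr hn2
  set f : ℕ → ℕ := fun b => Int.gcd (n1 * a + n2 * b) (m : ℤ) with hf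
  have hmap : ∀ b ∈ Finset.range m, f b ∈ m.divisors := by
    intro b _
    refine Nat.mem_divisors.mpr ⟨?_, hm.ne'⟩
    exact Int.natCast_dvd_natCast.mp (Int.gcd_dvd_right _ _)
  have key : ∀ d ∈ m.divisors,
      ∑ b ∈ (Finset.range m).filter (fun b => f b = d), f b ≤ n2.natAbs * m := by
    intro d hd
    obtain ⟨hdm, _⟩ := Nat.mem_divisors.mp hd
    have hd0 : 0 < d := Nat.pos_of_mem_divisors hd
    set g := Nat.gcd n2.natAbs d with hg_def
    have hg0 : 0 < g := Nat.gcd_pos_of_pos_right _ hd0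
    have hgd : g ∣ d := Nat.gcd_dvd_right _ _
    have hgn : g ∣ n2.natAbs := Nat.gcd_dvd_left _ _
    set k := d / g with hk_def
    have hdk : d = g * k := (Nat.mul_div_cancel' hgd).symm
    have hk0 : 0 < k := Nat.div_pos (Nat.le_of_dvd hd0 hgd) hg0
    have hkd : k ∣ d := ⟨g, by rw [hdk]; ring⟩
    have hkm : k ∣ m := hkd.trans hdm
    have hdiff : ∀ b b' : ℕ, f b = d → f b' = d → b ≤ b' → k ∣ b' - b := by
      intro b b' hb hb' hbb'
      have h1 : (d : ℤ) ∣ n1 * a + n2 * b := by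
        rw [← hb]; exact Int.gcd_dvd_left _ _
      have h2 : (d : ℤ) ∣ n1 * a + n2 * b' := by
        rw [← hb']; exact Int.gcd_dvd_left _ _
      have h3 : (d : ℤ) ∣ n2 * ((b' : ℤ) - b) := by
        have := dvd_sub h2 h1
        have heq : (n1 * a + n2 * b') - (n1 * a + n2 * b) = n2 * ((b' : ℤ) - b) := by
          ring
        rwa [heq] at this
      have h4 : d ∣ n2.natAbs * (b' - b) := by
        rw [← Nat.cast_sub hbb'] at h3
        have := Int.natAbs_dvd_natAbs.mpr h3
        simpa [Int.natAbs_mul] using this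
      have h5 : k ∣ (n2.natAbs / g) * (b' - b) := by
        have hgk : g * k ∣ g * ((n2.natAbs / g) * (b' - b)) := by
          rw [← mul_assoc, Nat.mul_div_cancel' hgn, ← hdk]; exact h4
        exact (mul_dvd_mul_iff_left hg0.ne').mp hgk
      have hcop : Nat.Coprime k (n2.natAbs / g) :=
        (Nat.coprime_div_gcd_div_gcd hg0).symm
      exact hcop.dvd_of_dvd_mul_left h5
    have hcard : ((Finset.range m).filter (fun b => f b = d)).card ≤ m / k := by
      have hmain : ∀ b b' : ℕ, b ∈ (Finset.range m).filter (fun b => f b = d) →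
          b' ∈ (Finset.range m).filter (fun b => f b = d) → b ≤ b' → b / k = b' / k →
          b = b' := by
        intro b b' hb hb' hle hdiv
        simp only [Finset.mem_filter, Finset.mem_range] at hb hb'
        obtain ⟨t, ht⟩ := hdiff b b' hb.2 hb'.2 hle
        have hb'eq : b' = b + k * t := by omega
        rw [hb'eq, Nat.add_mul_div_left _ _ hk0] at hdiv
        have ht0 : t = 0 := by
          have := left_eq_add.mp hdiv
          omega
        subst ht0
        simpa using hb'eq.symm
      have := Finset.card_le_card_of_injOn
        (s := (Finset.range m).filter (fun b => f b = d))
        (t := Finset.range (m / k)) (fun b => b / k) ?_ ?_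
      · simpa using this
      · intro b hb
        simp only [Finset.mem_coe, Finset.mem_filter, Finset.mem_range] at hb
        exact Finset.mem_range.mpr (Nat.div_lt_div_of_lt_of_dvd hkm hb.1)
      · intro b hb b' hb' hbb
        simp only [Finset.mem_coe] at hb hb'
        rcases le_total b b' with h | h
        · exact hmain b b' hb hb' h hbb
        · exact (hmain b' b hb' hb h hbb.symm).symm
    calc ∑ b ∈ (Finset.range m).filter (fun b => f b = d), f b
        = ∑ _b ∈ (Finset.range m).filter (fun b => f b = d), d :=
          Finset.sum_congr rfl (fun b hb => (Finset.mem_filter.mp hb).2)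
      _ = ((Finset.range m).filter (fun b => f b = d)).card * d := by
          rw [Finset.sum_const, smul_eq_mul]
      _ ≤ (m / k) * d := Nat.mul_le_mul_right _ hcard
      _ = g * m := by
          rw [hdk, show m / k * (g * k) = g * (m / k * k) by ring,
            Nat.div_mul_cancel hkm]
      _ ≤ n2.natAbs * m := Nat.mul_le_mul_right _ (Nat.gcd_le_left _ hn2a)
  calc ∑ b ∈ Finset.range m, f b
      = ∑ d ∈ m.divisors, ∑ b ∈ (Finset.range m).filter (fun b => f b = d), f b :=
        (Finset.sum_fiberwise_of_maps_to hmap f).symm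
    _ ≤ ∑ _d ∈ m.divisors, n2.natAbs * m := Finset.sum_le_sum key
    _ = m.divisors.card * (n2.natAbs * m) := by rw [Finset.sum_const, smul_eq_mul]
    _ = n2.natAbs * m * m.divisors.card := by ring
end

section
/- Let q be a positive integer with gcd-split q = q0·q1, gcd(q0,q1)=1, and q0ℓ0 + q1ℓ1 = 1. Suppose a | q0 and integers t1, t2, p1, p2 satisfy t1·p1 ≡ a (mod q), t2·p1 ≡ 0 (mod q), t1·p2 ≡ b (mod q), t2·p2 ≡ q/a (mod q), with gcd(p1,p2,q)=1, where y1 ≡ p1 (mod q0). Then gcd(q0, y1) = a. -/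
theorem stmt15 (q q0 q1 a : ℕ) (hq0 : 0 < q0) (hq1 : 0 < q1)
    (hq : q = q0 * q1) (hcop : Nat.Coprime q0 q1)
    (ℓ0 ℓ1 : ℤ) (hbezout : (q0 : ℤ) * ℓ0 + (q1 : ℤ) * ℓ1 = 1)
    (ha : a ∣ q0) (hapos : 0 < a)
    (hrad : ∀ p : ℕ, p.Prime → p ∣ q0 → p ∣ a)
    (t1 t2 p1 p2 b y1 : ℤ)
    (h1 : t1 * p1 ≡ (a : ℤ) [ZMOD (q : ℤ)])
    (h2 : t2 * p1 ≡ 0 [ZMOD (q : ℤ)])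
    (h3 : t1 * p2 ≡ b [ZMOD (q : ℤ)])
    (h4 : t2 * p2 ≡ ((q / a : ℕ) : ℤ) [ZMOD (q : ℤ)])
    (hgcd : Int.gcd (Int.gcd p1 p2) (q : ℤ) = 1)
    (hy1 : y1 ≡ p1 [ZMOD (q0 : ℤ)]) :
    Int.gcd (q0 : ℤ) y1 = a := by
  have hqpos : 0 < q := hq ▸ Nat.mul_pos hq0 hq1
  have haq : a ∣ q := hq ▸ ha.mul_right q1
  have hQA : ((q / a : ℕ) : ℤ) * (a : ℤ) = (q : ℤ) := by
    rw [← Nat.cast_mul, Nat.div_mul_cancel haq]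
  have hqa_pos : (0 : ℤ) < ((q / a : ℕ) : ℤ) := by
    exact_mod_cast Nat.div_pos (Nat.le_of_dvd hqpos haq) hapos
  have hane : ((a : ℤ)) ≠ 0 := by exact_mod_cast hapos.ne'
  -- q ∣ a * t2
  have key1 : (q : ℤ) ∣ (a : ℤ) * t2 := by
    have e1 : t2 * (t1 * p1) ≡ t2 * (a : ℤ) [ZMOD (q : ℤ)] := h1.mul_left t2
    have e2 : t1 * (t2 * p1) ≡ t1 * 0 [ZMOD (q : ℤ)] := h2.mul_left t1
    have e3 : (a : ℤ) * t2 ≡ 0 [ZMOD (q : ℤ)] := by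
      calc (a : ℤ) * t2 = t2 * (a : ℤ) := by ring
        _ ≡ t2 * (t1 * p1) [ZMOD (q : ℤ)] := e1.symm
        _ = t1 * (t2 * p1) := by ring
        _ ≡ t1 * 0 [ZMOD (q : ℤ)] := e2
        _ = 0 := by ring
    exact (Int.modEq_zero_iff_dvd).mp e3
  obtain ⟨s, hs⟩ : ((q / a : ℕ) : ℤ) ∣ t2 := by
    rcases key1 with ⟨k, hk⟩
    refine ⟨k, ?_⟩
    have h5 : (a : ℤ) * t2 = (a : ℤ) * (((q / a : ℕ) : ℤ) * k) := by
      rw [hk, ← hQA]; ring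
    exact mul_left_cancel₀ hane h5
  -- a ∣ s * p1
  have hasp1 : (a : ℤ) ∣ s * p1 := by
    have hd : (q : ℤ) ∣ ((q / a : ℕ) : ℤ) * (s * p1) := by
      have h6 := (Int.modEq_zero_iff_dvd).mp h2
      rw [hs] at h6
      convert h6 using 1; ring
    rw [← hQA] at hd
    exact (mul_dvd_mul_iff_left hqa_pos.ne').mp hd
  -- a ∣ s * p2 - 1
  have hasp2 : (a : ℤ) ∣ s * p2 - 1 := by
    have hd : (q : ℤ) ∣ ((q / a : ℕ) : ℤ) * (1 - s * p2) := by
      have h6 := h4.dvd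
      rw [hs] at h6
      convert h6 using 1; ring
    rw [← hQA] at hd
    have h7 := (mul_dvd_mul_iff_left hqa_pos.ne').mp hd
    have h8 : s * p2 - 1 = -(1 - s * p2) := by ring
    rw [h8]
    exact dvd_neg.mpr h7
  -- a ∣ p1
  have hap1 : (a : ℤ) ∣ p1 := by
    have key : p1 = p2 * (s * p1) - p1 * (s * p2 - 1) := by ring
    rw [key]
    exact dvd_sub (hasp1.mul_left p2) (hasp2.mul_left p1)
  -- p1 - y1 = q0 * m
  obtain ⟨m, hm⟩ : ((q0 : ℤ)) ∣ p1 - y1 := hy1.dvd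
  have haq0 : (a : ℤ) ∣ (q0 : ℤ) := Int.natCast_dvd_natCast.mpr ha
  -- forward: a ∣ gcd q0 y1
  have hfwd : a ∣ Int.gcd (q0 : ℤ) y1 := by
    have hay1 : (a : ℤ) ∣ y1 := by
      have : y1 = p1 - (q0 : ℤ) * m := by rw [← hm]; ring
      rw [this]
      exact dvd_sub hap1 (haq0.mul_right m)
    exact Int.natCast_dvd_natCast.mp (Int.dvd_coe_gcd haq0 hay1)
  -- backward: gcd q0 y1 ∣ a
  have hbwd : Int.gcd (q0 : ℤ) y1 ∣ a := by
    set d : ℕ := Int.gcd (q0 : ℤ) y1 with hd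
    have hdq0 : (d : ℤ) ∣ (q0 : ℤ) := Int.gcd_dvd_left _ _
    have hdy1 : (d : ℤ) ∣ y1 := Int.gcd_dvd_right _ _
    have hdp1 : (d : ℤ) ∣ p1 := by
      have : p1 = y1 + (q0 : ℤ) * m := by rw [← hm]; ring
      rw [this]
      exact dvd_add hdy1 (hdq0.mul_right m)
    have hdq : (d : ℤ) ∣ (q : ℤ) := hdq0.trans (Int.natCast_dvd_natCast.mpr (hq ▸ Dvd.intro q1 rfl))
    have hda : (d : ℤ) ∣ (a : ℤ) := by
      have h7 : (q : ℤ) ∣ (a : ℤ) - t1 * p1 := h1.dvd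
      have : (a : ℤ) = ((a : ℤ) - t1 * p1) + t1 * p1 := by ring
      rw [this]
      exact dvd_add (hdq.trans h7) (hdp1.mul_left t1)
    exact Int.natCast_dvd_natCast.mp hda
  exact Nat.dvd_antisymm hbwd hfwd
end

section
/- Let q be a positive integer written as q = q0·q1 with gcd(q0, q1) = 1, and let a | q0 with every prime factor of q0 dividing a. For integers n1, n2, b, c, m, d and ℓ0, ℓ1 with q0ℓ0 + q1ℓ1 = 1 and gcd(b·ℓ1, q0/a) = 1, the product of Kloosterman sums satisfies |S((n1 a + n2 b)ℓ0, c m ℓ0; q1) · S((n1 b̄ a + n2)ℓ1, (c b ℓ1 + d·q0/a)m; q0)| ≤ σ₀(q)·√(q·a)·√(gcd(c·m, q/a)), where S(n, m; r) = Σ_{α mod r, gcd(α,r)=1} e(nα/r + m ᾱ/r) and b̄ is an inverse of b mod q0/a. -/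
open Real

/-- Kloosterman sum `S(n,m;r) = ∑_{α mod r, gcd(α,r)=1} e((nα + mᾱ)/r)`,
where `ᾱ` is the inverse of `α` modulo `r`. -/
noncomputable def kloosterman (r : ℕ) (n m : ℤ) : ℂ :=
  ∑ α ∈ (Finset.range r).filter (fun α => Nat.Coprime α r),
    eChar (((n * (α : ℤ) + m * ((((α : ZMod r)⁻¹).val : ℕ) : ℤ) : ℤ) : ℝ) / r)

theorem stmt19 (q q0 q1 a : ℕ) (hq0 : 0 < q0) (hq1 : 0 < q1)
    (hq : q = q0 * q1) (hcop : Nat.Coprime q0 q1)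
    (ha : a ∣ q0) (hapos : 0 < a)
    (hrad : ∀ p : ℕ, p.Prime → p ∣ q0 → p ∣ a)
    (ℓ0 ℓ1 : ℤ) (hbezout : (q0 : ℤ) * ℓ0 + (q1 : ℤ) * ℓ1 = 1)
    (n1 n2 b c m d bbar : ℤ)
    (hb : Int.gcd (b * ℓ1) ((q0 / a : ℕ) : ℤ) = 1)
    (hbbar : b * bbar ≡ 1 [ZMOD ((q0 / a : ℕ) : ℤ)])
    (hl0 : Int.gcd ℓ0 (q1 : ℤ) = 1)
    (hq1q0a : Int.gcd (q1 : ℤ) ((q0 / a : ℕ) : ℤ) = 1)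
    (hWeil : ∀ (n m : ℤ) (r : ℕ), 0 < r →
      ‖kloosterman r n m‖ ≤
        (r.divisors.card : ℝ) * Real.sqrt r * Real.sqrt (Int.gcd (Int.gcd n m) (r : ℤ))) :
    ‖(kloosterman q1 ((n1 * a + n2 * b) * ℓ0) (c * m * ℓ0) *
          kloosterman q0 ((n1 * bbar * a + n2) * ℓ1) ((c * b * ℓ1 + d * ((q0 / a : ℕ) : ℤ)) * m))‖
      ≤ (q.divisors.card : ℝ) * Real.sqrt ((q : ℝ) * a) *
          Real.sqrt (Int.gcd (c * m) ((q / a : ℕ) : ℤ)) := by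
  set Q : ℕ := q0 / a with hQdef
  have hq0aQ : a * Q = q0 := Nat.mul_div_cancel' ha
  have hQpos : 0 < Q := Nat.div_pos (Nat.le_of_dvd hq0 ha) hapos
  have hqa : q / a = q1 * Q := by
    subst hq
    rw [Nat.mul_comm q0 q1, Nat.mul_div_assoc q1 ha]
  -- abbreviations
  set N1 : ℤ := (n1 * a + n2 * b) * ℓ0 with hN1
  set M1 : ℤ := c * m * ℓ0 with hM1
  set N2 : ℤ := (n1 * bbar * a + n2) * ℓ1 with hN2
  set M2 : ℤ := (c * b * ℓ1 + d * (Q : ℤ)) * m with hM2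
  set g1 : ℕ := Int.gcd ((Int.gcd N1 M1 : ℕ) : ℤ) (q1 : ℤ) with hg1def
  set g2 : ℕ := Int.gcd ((Int.gcd N2 M2 : ℕ) : ℤ) (q0 : ℤ) with hg2def
  set G : ℕ := Int.gcd (c * m) ((q / a : ℕ) : ℤ) with hGdef
  -- Step 1 : g1 ∣ gcd(cm, q1)
  have hg1dvd : g1 ∣ Int.gcd (c * m) (q1 : ℤ) := by
    have hd1 : (g1 : ℤ) ∣ M1 :=
      dvd_trans (Int.gcd_dvd_left _ _) (dvd_trans (Int.gcd_dvd_right _ _) (by norm_cast))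
    have hd2 : (g1 : ℤ) ∣ (q1 : ℤ) := Int.gcd_dvd_right _ _
    have hcop1 : IsCoprime ℓ0 ((g1 : ℤ)) := by
      have : IsCoprime ℓ0 ((q1 : ℤ)) := Int.isCoprime_iff_gcd_eq_one.mpr hl0
      exact this.of_isCoprime_of_dvd_right hd2
    have hcm : (g1 : ℤ) ∣ c * m := (hcop1.symm).dvd_of_dvd_mul_right (by rwa [hM1] at hd1)
    exact_mod_cast Int.dvd_gcd hcm hd2
  -- Step 2 : g2 ∣ a * gcd(cm, Q)
  have hg2dvd : g2 ∣ a * Int.gcd (c * m) ((Q : ℕ) : ℤ) := by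
    have hd1 : (g2 : ℤ) ∣ M2 :=
      dvd_trans (Int.gcd_dvd_left _ _) (dvd_trans (Int.gcd_dvd_right _ _) (by norm_cast))
    have hd2 : (g2 : ℤ) ∣ (q0 : ℤ) := Int.gcd_dvd_right _ _
    -- g2 ∣ a * gcd(M2, Q)
    have key : (g2 : ℤ) ∣ (a : ℤ) * (Int.gcd M2 ((Q : ℕ) : ℤ) : ℤ) := by
      have h1 : (g2 : ℤ) ∣ (a : ℤ) * M2 := hd1.mul_left _
      have h2 : (g2 : ℤ) ∣ (a : ℤ) * (Q : ℤ) := by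
        rw [show ((a : ℤ) * Q) = ((a * Q : ℕ) : ℤ) by push_cast; ring, hq0aQ]
        exact hd2
      have := Int.dvd_gcd h1 h2
      rw [Int.gcd_mul_left, Int.natAbs_natCast] at this; exact_mod_cast this
    -- gcd(M2, Q) ∣ gcd(cm, Q)
    have step : (Int.gcd M2 ((Q : ℕ) : ℤ)) ∣ Int.gcd (c * m) ((Q : ℕ) : ℤ) := by
      set e : ℕ := Int.gcd M2 ((Q : ℕ) : ℤ) with hedef
      have he1 : (e : ℤ) ∣ M2 := Int.gcd_dvd_left _ _
      have he2 : (e : ℤ) ∣ ((Q : ℕ) : ℤ) := Int.gcd_dvd_right _ _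
      have hcope : IsCoprime (b * ℓ1) ((e : ℤ)) :=
        (Int.isCoprime_iff_gcd_eq_one.mpr hb).of_isCoprime_of_dvd_right he2
      have hM2' : (e : ℤ) ∣ (b * ℓ1) * (c * m) := by
        have : (b * ℓ1) * (c * m) = M2 - (d * m) * (Q : ℤ) := by rw [hM2]; ring
        rw [this]
        exact dvd_sub he1 (he2.mul_left _)
      have hcm : (e : ℤ) ∣ c * m := (hcope.symm).dvd_of_dvd_mul_left hM2'
      exact_mod_cast Int.dvd_gcd hcm he2
    exact (Int.natCast_dvd_natCast.mp key).trans (mul_dvd_mul_left a step)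
  -- gcd multiplicativity
  have hcopQ : Nat.Coprime q1 Q := by
    have := hq1q0a
    rwa [Int.gcd_natCast_natCast] at this
  have hmul : Int.gcd (c * m) (q1 : ℤ) * Int.gcd (c * m) ((Q : ℕ) : ℤ) = G := by
    rw [hGdef, hqa]
    rw [show ((q1 * Q : ℕ) : ℤ) = ((q1 : ℕ) : ℤ) * ((Q : ℕ) : ℤ) by push_cast; ring]
    simp only [Int.gcd, Int.natAbs_mul, Int.natAbs_natCast]
    exact (Nat.Coprime.gcd_mul _ hcopQ).symm
  -- key nat inequality
  have hGpos : 0 < G := by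
    rw [hGdef]
    have : ((q / a : ℕ) : ℤ) ≠ 0 := by
      rw [hqa]; positivity
    exact Int.gcd_pos_of_ne_zero_right _ this
  have hkey : g1 * g2 ≤ a * G := by
    have : g1 * g2 ∣ a * G := by
      rw [← hmul, show a * (Int.gcd (c*m) (q1:ℤ) * Int.gcd (c*m) ((Q:ℕ):ℤ))
        = Int.gcd (c*m) (q1:ℤ) * (a * Int.gcd (c*m) ((Q:ℕ):ℤ)) by ring]
      exact mul_dvd_mul hg1dvd hg2dvd
    exact Nat.le_of_dvd (by positivity) this
  -- Weil bounds
  have h1 := hWeil N1 M1 q1 hq1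
  have h2 := hWeil N2 M2 q0 hq0
  have habs1 : (0:ℝ) ≤ ‖kloosterman q1 N1 M1‖ := norm_nonneg _
  have hrhs2 : (0:ℝ) ≤ (q0.divisors.card : ℝ) * Real.sqrt q0 * Real.sqrt g2 := by positivity
  have hqpos : 0 < q := by subst hq; positivity
  have hcard : (q.divisors.card : ℝ) = (q0.divisors.card : ℝ) * (q1.divisors.card : ℝ) := by
    rw [hq]; exact_mod_cast congrArg (Nat.cast (R := ℝ)) (hcop.card_divisors_mul)
  calc ‖kloosterman q1 N1 M1 * kloosterman q0 N2 M2‖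
      = ‖kloosterman q1 N1 M1‖ * ‖kloosterman q0 N2 M2‖ := norm_mul _ _
    _ ≤ ((q1.divisors.card : ℝ) * Real.sqrt q1 * Real.sqrt g1) *
        ((q0.divisors.card : ℝ) * Real.sqrt q0 * Real.sqrt g2) := by
        exact mul_le_mul h1 h2 (norm_nonneg _) (by positivity)
    _ = ((q0.divisors.card : ℝ) * (q1.divisors.card : ℝ)) *
        (Real.sqrt q1 * Real.sqrt q0) * (Real.sqrt g1 * Real.sqrt g2) := by ring
    _ = (q.divisors.card : ℝ) * Real.sqrt q * Real.sqrt ((g1 * g2 : ℕ) : ℝ) := by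
        rw [hcard, hq]
        push_cast
        rw [Real.sqrt_mul (by positivity : (0:ℝ) ≤ ((q0:ℕ):ℝ)),
          Real.sqrt_mul (by positivity : (0:ℝ) ≤ ((g1:ℕ):ℝ))]
        ring
    _ ≤ (q.divisors.card : ℝ) * Real.sqrt q * Real.sqrt ((a * G : ℕ) : ℝ) := by
        have hcast : ((g1 * g2 : ℕ) : ℝ) ≤ ((a * G : ℕ) : ℝ) := by exact_mod_cast hkey
        gcongr
    _ = (q.divisors.card : ℝ) * Real.sqrt ((q : ℝ) * a) * Real.sqrt G := by
        push_cast
        rw [Real.sqrt_mul (by positivity : (0:ℝ) ≤ ((a:ℕ):ℝ)),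
          Real.sqrt_mul (by positivity : (0:ℝ) ≤ ((q:ℕ):ℝ))]
        ring
end
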